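/- In the 2-HST (X, d_X) built from the labeled perfect 2^d-ary tree, fix i_max = ⌊log₂(2/ε)⌋ (so 1/ε ≤ 2^{i_max} < 2/ε) and assume ε^{-d} ≤ n. Then any (1+ε)-spanner G of X has the property that every point u ∈ X is joined in G to at least 2^{d·i_max} − 2^{d(i_max−1)} ≥ ε^{-d}/2 points at distance exactly 2^{i_max} ≥ 1/ε from u, so the total edge weight of G is at least n·ε^{-(d+1)}/4. -/

import Mathlib

/-- Index of the first coordinate (counting from the root) where two leaves of the
perfect `2^d`-ary tree of depth `L` differ. -/
noncomputable def firstDiff (d L : ℕ) (u v : Fin L → Fin (2 ^ d)) : ℕ :=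
  sInf {i | ∃ hi : i < L, u ⟨i, hi⟩ ≠ v ⟨i, hi⟩}

/-- The 2-HST metric on the `(2^d)^L` leaves of the labeled perfect `2^d`-ary tree:
`d_X(u,v)` is the label `2^(height)` of the LCA of `u` and `v`. -/
noncomputable def treeDist (d L : ℕ) (u v : Fin L → Fin (2 ^ d)) : ℝ :=
  if u = v then 0 else 2 ^ (L - firstDiff d L u v)

/-- The weight of a path (list of vertices): sum of distances of consecutive pairs. -/
def pathWeight {X : Type*} (dX : X → X → ℝ) : List X → ℝ
  | [] => 0
  | [_] => 0
  | a :: b :: l => dX a b + pathWeight dX (b :: l)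

/-- `(X,E)` is a `t`-spanner of `(X,dX)`. -/
def IsSpanner {X : Type*} (dX : X → X → ℝ) (E : X → X → Prop) (t : ℝ) : Prop :=
  ∀ u v : X, ∃ p : List X, p.Chain' E ∧ p.head? = some u ∧ p.getLast? = some v ∧
    pathWeight dX p ≤ t * dX u v

open Classical in
/-- The total weight of the graph `(X,E)` with edge weights equal to distances
(each ordered pair counted once after dividing by 2). -/
noncomputable def graphWeight {X : Type*} [Fintype X] (dX : X → X → ℝ)
    (E : X → X → Prop) : ℝ :=
  (∑ u, ∑ v, if E u v then dX u v else 0) / 2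

section fd
variable {d L : ℕ} {u v w : Fin L → Fin (2 ^ d)}

lemma firstDiff_mem (h : u ≠ v) :
    firstDiff d L u v ∈ {i | ∃ hi : i < L, u ⟨i, hi⟩ ≠ v ⟨i, hi⟩} := by
  apply Nat.sInf_mem
  obtain ⟨i, hi⟩ : ∃ i, u i ≠ v i := by
    by_contra hc; push_neg at hc; exact h (funext hc)
  exact ⟨i.1, i.2, by simpa using hi⟩

lemma firstDiff_lt (h : u ≠ v) : firstDiff d L u v < L := by
  obtain ⟨hi, _⟩ := firstDiff_mem h; exact hi

lemma firstDiff_ne (h : u ≠ v) :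
    u ⟨firstDiff d L u v, firstDiff_lt h⟩ ≠ v ⟨firstDiff d L u v, firstDiff_lt h⟩ := by
  obtain ⟨hi, h2⟩ := firstDiff_mem h; exact h2

lemma agree_of_lt_firstDiff {i : ℕ} (hlt : i < firstDiff d L u v) (hi : i < L) :
    u ⟨i, hi⟩ = v ⟨i, hi⟩ := by
  by_contra hc
  have : firstDiff d L u v ≤ i := Nat.sInf_le ⟨hi, hc⟩
  omega

lemma treeDist_self (u : Fin L → Fin (2 ^ d)) : treeDist d L u u = 0 := by
  simp [treeDist]

lemma treeDist_nonneg : 0 ≤ treeDist d L u v := by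
  unfold treeDist; split <;> positivity

lemma treeDist_eq (h : u ≠ v) : treeDist d L u v = 2 ^ (L - firstDiff d L u v) :=
  if_neg h

lemma two_le_treeDist (h : u ≠ v) : 2 ≤ treeDist d L u v := by
  rw [treeDist_eq h]
  calc (2:ℝ) = 2 ^ 1 := (pow_one 2).symm
  _ ≤ 2 ^ (L - firstDiff d L u v) :=
    pow_le_pow_right₀ one_le_two (by have := firstDiff_lt h; omega)

lemma treeDist_ultra : treeDist d L u w ≤ max (treeDist d L u v) (treeDist d L v w) := by
  rcases eq_or_ne u w with rfl | huw
  · rw [treeDist_self]; exact le_max_of_le_left treeDist_nonneg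
  rcases eq_or_ne u v with rfl | huv
  · exact le_max_right _ _
  rcases eq_or_ne v w with rfl | hvw
  · exact le_max_left _ _
  have hmin : min (firstDiff d L u v) (firstDiff d L v w) ≤ firstDiff d L u w := by
    by_contra hc
    push_neg at hc
    have h1 : u ⟨firstDiff d L u w, firstDiff_lt huw⟩ = v ⟨firstDiff d L u w, firstDiff_lt huw⟩ :=
      agree_of_lt_firstDiff (by omega) _
    have h2 : v ⟨firstDiff d L u w, firstDiff_lt huw⟩ = w ⟨firstDiff d L u w, firstDiff_lt huw⟩ :=
      agree_of_lt_firstDiff (by omega) _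
    exact firstDiff_ne huw (h1.trans h2)
  rw [treeDist_eq huw, treeDist_eq huv, treeDist_eq hvw]
  rcases le_total (firstDiff d L u v) (firstDiff d L v w) with hle | hle
  · refine le_max_of_le_left (pow_le_pow_right₀ one_le_two ?_)
    omega
  · refine le_max_of_le_right (pow_le_pow_right₀ one_le_two ?_)
    omega

lemma treeDist_eq_iff {i_max : ℕ} (hiL : i_max ≤ L) (h1 : 1 ≤ i_max)
    (hj : L - i_max < L) :
    treeDist d L u v = 2 ^ i_max ↔
      ((∀ i : Fin L, i.1 < L - i_max → v i = u i) ∧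
        v ⟨L - i_max, hj⟩ ≠ u ⟨L - i_max, hj⟩) := by
  constructor
  · intro hdist
    have huv : u ≠ v := by
      rintro rfl
      rw [treeDist, if_pos rfl] at hdist
      have : (0:ℝ) < 2 ^ i_max := by positivity
      linarith
    rw [treeDist_eq huv] at hdist
    have hexp : L - firstDiff d L u v = i_max :=
      pow_right_injective₀ (by norm_num : (0:ℝ) < 2) (by norm_num) hdist
    have hfd : firstDiff d L u v = L - i_max := by
      have := firstDiff_lt huv; omega
    have hfin : (⟨firstDiff d L u v, firstDiff_lt huv⟩ : Fin L) = ⟨L - i_max, hj⟩ :=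
      Fin.ext hfd
    constructor
    · intro i hi
      have := agree_of_lt_firstDiff (u := u) (v := v) (i := i.1) (by omega) i.2
      simpa using this.symm
    · have := firstDiff_ne huv
      rw [hfin] at this
      exact fun hc => this hc.symm
  · rintro ⟨hagree, hdiff⟩
    have huv : u ≠ v := fun hc => hdiff (by rw [hc])
    have hfd : firstDiff d L u v = L - i_max := by
      have h1' : firstDiff d L u v ≤ L - i_max :=
        Nat.sInf_le ⟨hj, fun hc => hdiff hc.symm⟩
      rcases eq_or_lt_of_le h1' with h | h
      · exact h
      · exact absurd ((hagree ⟨_, firstDiff_lt huv⟩ h).symm) (firstDiff_ne huv)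
    rw [treeDist_eq huv, hfd]
    congr 1
    omega
end fd

lemma pathWeight_lower {X : Type*} (dX : X → X → ℝ) (E : X → X → Prop)
    (hself : ∀ a, dX a a = 0)
    (hne : ∀ a b : X, a ≠ b → 2 ≤ dX a b)
    (hultra : ∀ a b c : X, dX a c ≤ max (dX a b) (dX b c))
    (hE : ∀ a b, E a b → a ≠ b)
    (p : List X) : ∀ u v : X, p.Chain' E → p.head? = some u → p.getLast? = some v →
      dX u v + 2 * ((p.length - 2 : ℕ) : ℝ) ≤ pathWeight dX p ∧
      2 * ((p.length - 1 : ℕ) : ℝ) ≤ pathWeight dX p := by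
  induction p with
  | nil => intro u v _ hh _; simp at hh
  | cons a tail ih =>
    intro u v hc hh hl
    have hua : u = a := by simpa using hh.symm
    subst hua
    match tail, hc, hl with
    | [], _, hl =>
      have huv : u = v := by simpa using hl
      subst huv
      simp [pathWeight, hself]
    | b :: l, hc, hl =>
      rw [show List.Chain' E (u :: b :: l) ↔ _ from List.isChain_cons_cons] at hc
      have hlast : (b :: l).getLast? = some v := by
        rw [List.getLast?_cons_cons] at hl; exact hl
      obtain ⟨H1, H2⟩ := ih b v hc.2 rfl hlast
      have hab : u ≠ b := hE _ _ hc.1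
      have hdab : 2 ≤ dX u b := hne _ _ hab
      have hpw : pathWeight dX (u :: b :: l) = dX u b + pathWeight dX (b :: l) := rfl
      set m := l.length with hm
      have hlen1 : (u :: b :: l).length - 2 = m := by simp [hm]
      have hlen2 : (u :: b :: l).length - 1 = m + 1 := by simp [hm]
      have hlen3 : (b :: l).length - 1 = m := by simp [hm]
      rw [hpw, hlen1, hlen2]
      rw [hlen3] at H2
      constructor
      · by_cases hbv : b = v
        · subst hbv; linarith
        · have hml : 1 ≤ m := by
            match l with
            | [] => simp at hlast; exact absurd hlast hbv
            | x :: l' => simp [hm]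
          have hlen4 : ((b :: l).length - 2 : ℕ) = m - 1 := by simp [hm]
          rw [hlen4] at H1
          have hcast : ((m - 1 : ℕ) : ℝ) = (m : ℝ) - 1 := by
            push_cast [hml]; ring
          rw [hcast] at H1
          have hdbv : 2 ≤ dX b v := hne _ _ hbv
          have hu : dX u v ≤ max (dX u b) (dX b v) := hultra u b v
          rcases max_cases (dX u b) (dX b v) with ⟨hmx, _⟩ | ⟨hmx, _⟩ <;>
            rw [hmx] at hu <;> linarith
      · push_cast; linarith

def ioiEquiv (L j : ℕ) : {i : Fin L // j < i.1} ≃ Fin (L - j - 1) where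
  toFun i := ⟨i.1.1 - j - 1, by have := i.1.2; have := i.2; omega⟩
  invFun k := ⟨⟨k.1 + j + 1, by have := k.2; omega⟩, by simp⟩
  left_inv i := by
    ext
    have := i.2
    simp
    omega
  right_inv k := by ext; simp; omega

noncomputable def sphereEquiv (N L j : ℕ) (hj : j < L) (u : Fin L → Fin N) :
    {v : Fin L → Fin N // (∀ i : Fin L, i.1 < j → v i = u i) ∧ v ⟨j, hj⟩ ≠ u ⟨j, hj⟩} ≃
    {x : Fin N // x ≠ u ⟨j, hj⟩} × ({i : Fin L // j < i.1} → Fin N) where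
  toFun v := (⟨v.1 ⟨j, hj⟩, v.2.2⟩, fun i => v.1 i.1)
  invFun p := ⟨fun i => if h : i.1 < j then u i else if h' : j < i.1 then p.2 ⟨i, h'⟩ else p.1.1,
    fun i hi => dif_pos hi,
    by dsimp only; rw [dif_neg (lt_irrefl j), dif_neg (lt_irrefl j)]; exact p.1.2⟩
  left_inv v := by
    apply Subtype.ext
    funext i
    dsimp only
    rcases lt_trichotomy i.1 j with h | h | h
    · simp only [dif_pos h]
      exact (v.2.1 i h).symm
    · have : i = ⟨j, hj⟩ := Fin.ext h
      subst this
      simp only [dif_neg (lt_irrefl j)]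
    · rw [dif_neg (by omega), dif_pos h]
  right_inv p := by
    refine Prod.ext (Subtype.ext ?_) (funext fun i => ?_)
    · dsimp only
      simp only [dif_neg (lt_irrefl j)]
    · rcases i with ⟨i, hi⟩
      dsimp only
      simp only [dif_neg (by omega : ¬ i.1 < j), dif_pos hi]

lemma card_sphere (N L j : ℕ) (hj : j < L) (u : Fin L → Fin N) :
    Nat.card {v : Fin L → Fin N //
      (∀ i : Fin L, i.1 < j → v i = u i) ∧ v ⟨j, hj⟩ ≠ u ⟨j, hj⟩}
      = (N - 1) * N ^ (L - j - 1) := by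
  rw [Nat.card_congr (sphereEquiv N L j hj u), Nat.card_prod, Nat.card_fun,
    Nat.card_congr (ioiEquiv L j)]
  simp [Nat.card_eq_fintype_card, Fintype.card_subtype_compl, Fintype.card_subtype_eq]

/-- in the 2-HST on the `n = (2^d)^L` leaves, with
`1/ε ≤ 2^i_max < 2/ε` and `ε⁻¹^d ≤ n`, every `(1+ε)`-spanner joins each point `u`
to at least `2^(d·i_max) − 2^(d·(i_max−1)) ≥ ε⁻¹^d / 2` points at distance exactly
`2^i_max` from `u`, and hence has total edge weight at least `n·ε⁻¹^(d+1)/4`. -/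
theorem stmt9 (d L i_max : ℕ) (hd : 1 ≤ d) (ε : ℝ) (hε0 : 0 < ε) (hε1 : ε < 1)
    (hiL : i_max ≤ L)
    (hlow : ε⁻¹ ≤ 2 ^ i_max) (hhigh : (2 : ℝ) ^ i_max < 2 / ε)
    (hn : ε⁻¹ ^ d ≤ (((2 ^ d) ^ L : ℕ) : ℝ))
    (E : (Fin L → Fin (2 ^ d)) → (Fin L → Fin (2 ^ d)) → Prop)
    (hEsymm : Symmetric E) (hEirr : ∀ x, ¬ E x x)
    (hspan : IsSpanner (treeDist d L) E (1 + ε)) :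
    (∀ u, (2 : ℝ) ^ (d * i_max) - 2 ^ (d * (i_max - 1)) ≤
      (Set.ncard {v | E u v ∧ treeDist d L u v = 2 ^ i_max} : ℝ)) ∧
    (ε⁻¹ ^ d / 2 ≤ (2 : ℝ) ^ (d * i_max) - 2 ^ (d * (i_max - 1))) ∧
    ((((2 ^ d) ^ L : ℕ) : ℝ) * ε⁻¹ ^ (d + 1) / 4 ≤ graphWeight (treeDist d L) E) := by
  classical
  have hεinv : (1:ℝ) < ε⁻¹ := (one_lt_inv₀ hε0).2 hε1
  have hεpos : (0:ℝ) < ε⁻¹ := by linarith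
  have h1im : 1 ≤ i_max := by
    rcases Nat.eq_zero_or_pos i_max with h | h
    · rw [h, pow_zero] at hlow; linarith
    · exact h
  obtain ⟨k, rfl⟩ : ∃ k, i_max = k + 1 := ⟨i_max - 1, by omega⟩
  have hj : L - (k+1) < L := by omega
  have hEne : ∀ a b : Fin L → Fin (2^d), E a b → a ≠ b := fun a b hab h => hEirr a (h ▸ hab)
  have hedge : ∀ u v : Fin L → Fin (2^d), treeDist d L u v = 2 ^ (k+1) → E u v := by
    intro u v hdist
    have hpp : (0:ℝ) < 2 ^ (k+1) := by positivity
    have huv : u ≠ v := by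
      rintro rfl; rw [treeDist_self] at hdist; linarith
    obtain ⟨p, hchain, hh, hl, hw⟩ := hspan u v
    obtain ⟨H1, _⟩ := pathWeight_lower (treeDist d L) E treeDist_self
      (fun a b h => two_le_treeDist h) (fun a b c => treeDist_ultra) hEne p u v hchain hh hl
    rw [hdist] at H1 hw
    have hε2 : ε * 2 ^ (k+1) < 2 := by
      rw [lt_div_iff₀ hε0] at hhigh
      linarith
    have hwub : pathWeight (treeDist d L) p < 2 ^ (k+1) + 2 := by
      have : (1+ε) * (2:ℝ) ^ (k+1) = 2^(k+1) + ε * 2^(k+1) := by ring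
      linarith
    have hlen : p.length - 2 = 0 := by
      by_contra h
      have h1 : (1:ℝ) ≤ ((p.length - 2 : ℕ) : ℝ) := by
        exact_mod_cast Nat.one_le_iff_ne_zero.mpr h
      linarith
    match p, hh, hl, hchain, hlen with
    | [a], hh, hl, _, _ =>
      have ha : a = u := by simpa using hh
      have hb : a = v := by simpa using hl
      exact absurd (ha.symm.trans hb) huv
    | [a, b], hh, hl, hchain, _ =>
      have ha : a = u := by simpa using hh
      have hb : b = v := by simpa using hl
      subst ha; subst hb
      exact List.isChain_pair.mp hchain
    | a :: b :: c :: l, _, _, _, hlen => simp at hlen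
  have hcount : ∀ u : Fin L → Fin (2^d),
      ({v | E u v ∧ treeDist d L u v = 2 ^ (k+1)} : Set _).ncard
      = (2^d - 1) * (2^d)^k := by
    intro u
    have hset : {v | E u v ∧ treeDist d L u v = 2 ^ (k+1)}
        = {v : Fin L → Fin (2^d) |
            (∀ i : Fin L, i.1 < L - (k+1) → v i = u i) ∧
              v ⟨L - (k+1), hj⟩ ≠ u ⟨L - (k+1), hj⟩} := by
      ext v
      simp only [Set.mem_setOf_eq]
      constructor
      · rintro ⟨_, hdist⟩
        exact (treeDist_eq_iff hiL (by omega) hj).mp hdist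
      · intro h
        have hdist := (treeDist_eq_iff hiL (by omega) hj).mpr h
        exact ⟨hedge u v hdist, hdist⟩
    rw [hset, ← Nat.card_coe_set_eq]
    have hexp : L - (L - (k+1)) - 1 = k := by omega
    have hcs := card_sphere (2^d) L (L - (k+1)) hj u
    rw [hexp] at hcs
    exact hcs
  have hcastcount : (((2^d - 1) * (2^d)^k : ℕ) : ℝ) = 2 ^ (d*(k+1)) - 2 ^ (d*k) := by
    have h2d : (1:ℕ) ≤ 2^d := Nat.one_le_two_pow
    push_cast [h2d]
    have e1 : (2:ℝ)^(d*(k+1)) = 2^(d*k) * 2^d := by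
      rw [← pow_add]; congr 1
    rw [← pow_mul, e1]
    ring
  have hpart1 : ∀ u : Fin L → Fin (2^d), (2:ℝ)^(d*(k+1)) - 2^(d*k) ≤
      (Set.ncard {v | E u v ∧ treeDist d L u v = 2 ^ (k+1)} : ℝ) := by
    intro u
    rw [hcount u, hcastcount]
  have hA : ε⁻¹ ^ d ≤ (2:ℝ) ^ (d*(k+1)) := by
    calc ε⁻¹ ^ d ≤ ((2:ℝ)^(k+1)) ^ d := pow_le_pow_left₀ hεpos.le hlow d
    _ = 2 ^ (d*(k+1)) := by rw [← pow_mul]; congr 1; ring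
  have hB : (2:ℝ) ^ (d*k) * 2 ≤ 2 ^ (d*(k+1)) := by
    have e1 : (2:ℝ)^(d*(k+1)) = 2^(d*k) * 2^d := by
      rw [← pow_add]; congr 1
    rw [e1]
    have h2 : (2:ℝ) ≤ 2^d := by
      calc (2:ℝ) = 2^1 := (pow_one 2).symm
      _ ≤ 2^d := pow_le_pow_right₀ one_le_two hd
    nlinarith [pow_pos (by norm_num : (0:ℝ) < 2) (d*k)]
  have hpart2 : ε⁻¹ ^ d / 2 ≤ (2:ℝ)^(d*(k+1)) - 2^(d*k) := by linarith
  have hinner : ∀ u : Fin L → Fin (2^d),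
      ((2:ℝ)^(d*(k+1)) - 2^(d*k)) * ε⁻¹ ≤
        ∑ v, (if E u v then treeDist d L u v else 0) := by
    intro u
    set F : Finset _ :=
      Finset.univ.filter (fun v => E u v ∧ treeDist d L u v = 2 ^ (k+1)) with hF
    have hcoe : (F : Set (Fin L → Fin (2^d)))
        = {v | E u v ∧ treeDist d L u v = 2 ^ (k+1)} := by
      ext v; simp [hF]
    have hFcard : (F.card : ℝ) = (2:ℝ)^(d*(k+1)) - 2^(d*k) := by
      rw [← hcastcount, ← hcount u, ← hcoe, Set.ncard_coe_finset]
    have hsum2 : ∀ v ∈ F, (if E u v then treeDist d L u v else 0) = (2:ℝ)^(k+1) := by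
      intro v hv
      simp only [hF, Finset.mem_filter] at hv
      rw [if_pos hv.2.1, hv.2.2]
    have step1 : ((2:ℝ)^(d*(k+1)) - 2^(d*k)) * ε⁻¹ ≤ (F.card : ℝ) * 2^(k+1) := by
      rw [hFcard]
      apply mul_le_mul le_rfl hlow hεpos.le
      linarith [hpart2, pow_pos hεpos d]
    have step2 : ∑ v ∈ F, (if E u v then treeDist d L u v else 0)
        = (F.card : ℝ) * 2^(k+1) := by
      rw [Finset.sum_congr rfl hsum2, Finset.sum_const, nsmul_eq_mul]
    have step3 : ∑ v ∈ F, (if E u v then treeDist d L u v else 0)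
        ≤ ∑ v, (if E u v then treeDist d L u v else 0) := by
      apply Finset.sum_le_sum_of_subset_of_nonneg (Finset.subset_univ F)
      intro v _ _
      split
      · exact treeDist_nonneg
      · exact le_rfl
    linarith
  have htotal : (((2^d)^L : ℕ):ℝ) * (ε⁻¹^(d+1) / 2) ≤
      ∑ u, ∑ v, (if E u v then treeDist d L u v else 0) := by
    have hconst : ∀ u : Fin L → Fin (2^d),
        ε⁻¹^(d+1)/2 ≤ ∑ v, (if E u v then treeDist d L u v else 0) := by
      intro u
      refine le_trans ?_ (hinner u)
      rw [pow_succ]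
      nlinarith [hpart2, hεpos, pow_pos hεpos d]
    have step1 : (((2^d)^L : ℕ):ℝ) * (ε⁻¹^(d+1)/2)
        = ∑ _u : Fin L → Fin (2^d), ε⁻¹^(d+1)/2 := by
      rw [Finset.sum_const, nsmul_eq_mul]
      congr 1
      simp [Fintype.card_fun]
    rw [step1]
    exact Finset.sum_le_sum (fun u _ => hconst u)
  refine ⟨?_, ?_, ?_⟩
  · intro u
    simpa [Nat.add_sub_cancel] using hpart1 u
  · simpa [Nat.add_sub_cancel] using hpart2
  · unfold graphWeight
    linarith [htotal]
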